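/- If G is a finite simple graph without isolated vertices, then G has a star partition with exactly ν(G) parts, where ν(G) is the matching number of G. -/
import Mathlib


/-- A star partition of `G`. -/
def IsStarPartition {V : Type*} [Fintype V] [DecidableEq V] (G : SimpleGraph V)
    (P : Finset (Finset V)) : Prop :=
  (∀ v : V, ∃! S : Finset V, S ∈ P ∧ v ∈ S) ∧
  (∀ S ∈ P, 2 ≤ S.card) ∧
  (∀ S ∈ P, ∃ c ∈ S, ∀ v ∈ S, v ≠ c → G.Adj c v)

/-- A matching of `G`, given as a finite set of pairwise disjoint edges. -/
def IsMatchingSet {V : Type*} (G : SimpleGraph V) (M : Finset (Sym2 V)) : Prop :=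
  (∀ e ∈ M, e ∈ G.edgeSet) ∧
  (∀ e ∈ M, ∀ f ∈ M, e ≠ f → ∀ v : V, v ∈ e → v ∉ f)

/-- The matching number `ν(G)`: the maximum size of a matching in `G`. -/
noncomputable def matchingNumber {V : Type*} (G : SimpleGraph V) : ℕ :=
  sSup {n : ℕ | ∃ M : Finset (Sym2 V), IsMatchingSet G M ∧ M.card = n}

lemma matching_empty {V : Type*} (G : SimpleGraph V) :
    IsMatchingSet G (∅ : Finset (Sym2 V)) := by
  constructor <;> simp

lemma matching_subset {V : Type*} (G : SimpleGraph V) {M M' : Finset (Sym2 V)}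
    (h : M' ⊆ M) (hM : IsMatchingSet G M) : IsMatchingSet G M' :=
  ⟨fun e he => hM.1 e (h he), fun e he f hf => hM.2 e (h he) f (h hf)⟩

lemma matching_insert {V : Type*} [DecidableEq V] (G : SimpleGraph V)
    {M : Finset (Sym2 V)} (hM : IsMatchingSet G M) {e : Sym2 V}
    (he : e ∈ G.edgeSet) (hd : ∀ f ∈ M, ∀ v, v ∈ e → v ∉ f) :
    IsMatchingSet G (insert e M) ∧ (insert e M).card = M.card + 1 := by
  have hem : e ∉ M := by
    intro h
    induction e using Sym2.ind with
    | _ x y => exact hd _ h x (by simp) (by simp)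
  refine ⟨⟨?_, ?_⟩, Finset.card_insert_of_notMem hem⟩
  · intro f hf
    rcases Finset.mem_insert.mp hf with rfl | hf
    · exact he
    · exact hM.1 f hf
  · intro e1 h1 e2 h2 hne v hv1
    rcases Finset.mem_insert.mp h1 with he1 | h1 <;> rcases Finset.mem_insert.mp h2 with he2 | h2
    · exact absurd (he1.trans he2.symm) hne
    · exact hd _ h2 v (he1 ▸ hv1)
    · rw [he2]; exact fun hv2 => hd _ h1 v hv2 hv1
    · exact hM.2 e1 h1 e2 h2 hne v hv1

lemma exists_max_matching {V : Type*} [Fintype V] [DecidableEq V] (G : SimpleGraph V) :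
    ∃ M : Finset (Sym2 V), IsMatchingSet G M ∧ M.card = matchingNumber G ∧
      ∀ M' : Finset (Sym2 V), IsMatchingSet G M' → M'.card ≤ M.card := by
  classical
  set s : Set ℕ := {n : ℕ | ∃ M : Finset (Sym2 V), IsMatchingSet G M ∧ M.card = n} with hs
  have hne : s.Nonempty := ⟨0, ∅, matching_empty G, rfl⟩
  have hbdd : BddAbove s := by
    refine ⟨Fintype.card (Sym2 V), ?_⟩
    rintro n ⟨M, _, rfl⟩
    exact Finset.card_le_univ M
  have hmem : sSup s ∈ s := Nat.sSup_mem hne hbdd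
  obtain ⟨M, hM, hcard⟩ := hmem
  exact ⟨M, hM, hcard, fun M' hM' => hcard ▸ le_csSup hbdd ⟨M', hM', rfl⟩⟩

/-- A finite simple graph without isolated vertices has a star
partition with exactly `ν(G)` parts. -/
theorem stmt6 {V : Type*} [Fintype V] [DecidableEq V] (G : SimpleGraph V)
    (hiso : ∀ v : V, ∃ u : V, G.Adj v u) :
    ∃ P : Finset (Finset V), IsStarPartition G P ∧ P.card = matchingNumber G := by
  classical
  obtain ⟨M, hM, hcard, hmax⟩ := exists_max_matching G
  set matched : V → Prop := fun v => ∃ e ∈ M, v ∈ e with hmatched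
  -- every neighbor of an unmatched vertex is matched
  have hA : ∀ u w : V, ¬ matched u → G.Adj u w → matched w := by
    intro u w hu huw
    by_contra hw
    have hd : ∀ f ∈ M, ∀ v, v ∈ s(u, w) → v ∉ f := by
      intro f hf v hv
      rw [Sym2.mem_iff] at hv
      rcases hv with rfl | rfl
      · exact fun h => hu ⟨f, hf, h⟩
      · exact fun h => hw ⟨f, hf, h⟩
    obtain ⟨hM', hc⟩ := matching_insert G hM (G.mem_edgeSet.mpr huw) hd
    have := hmax _ hM'
    omega
  have hEx : ∀ u : V, ¬ matched u → ∃ e, e ∈ M ∧ ∃ c, c ∈ e ∧ G.Adj u c := by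
    intro u hu
    obtain ⟨w, huw⟩ := hiso u
    obtain ⟨e, he, hwe⟩ := hA u w hu huw
    exact ⟨e, he, w, hwe, huw⟩
  set f : V → Sym2 V := fun u =>
    if h : ∃ e, e ∈ M ∧ ∃ c, c ∈ e ∧ G.Adj u c then h.choose else s(u, u) with hf
  have hfM : ∀ u, ¬ matched u → f u ∈ M ∧ ∃ c, c ∈ f u ∧ G.Adj u c := by
    intro u hu
    have h := hEx u hu
    simp only [hf, dif_pos h]
    exact h.choose_spec
  set part : Sym2 V → Finset V :=
    fun e => Finset.univ.filter (fun v => v ∈ e ∨ (¬ matched v ∧ f v = e)) with hpart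
  have hmem_part : ∀ v e, v ∈ part e ↔ (v ∈ e ∨ (¬ matched v ∧ f v = e)) := by
    intro v e; simp [hpart]
  -- each vertex lies in the part of at most one matching edge
  have hbetween : ∀ v (e1 e2 : Sym2 V), e1 ∈ M → e2 ∈ M →
      v ∈ part e1 → v ∈ part e2 → e1 = e2 := by
    intro v e1 e2 h1 h2 hv1 hv2
    rw [hmem_part] at hv1 hv2
    rcases hv1 with hv1 | ⟨hu1, hfv1⟩
    · rcases hv2 with hv2 | ⟨hu2, _⟩
      · by_contra hne
        exact hM.2 e1 h1 e2 h2 hne v hv1 hv2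
      · exact absurd ⟨e1, h1, hv1⟩ hu2
    · rcases hv2 with hv2 | ⟨hu2, hfv2⟩
      · exact absurd ⟨e2, h2, hv2⟩ hu1
      · rw [← hfv1, hfv2]
  -- the key exchange argument
  have hB : ∀ (x y u w : V), s(x, y) ∈ M → ¬ matched u → ¬ matched w → u ≠ w →
      G.Adj u x → G.Adj w y → False := by
    intro x y u w he hu hw huw hux hwy
    have hxy : G.Adj x y := G.mem_edgeSet.mp (hM.1 _ he)
    have hxne : x ≠ y := hxy.ne
    have hM0 : IsMatchingSet G (M.erase s(x, y)) :=
      matching_subset G (Finset.erase_subset _ _) hM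
    have hxnot : ∀ fe ∈ M.erase s(x, y), x ∉ fe := by
      intro fe hfe
      exact hM.2 _ he fe (Finset.mem_of_mem_erase hfe)
        (Ne.symm (Finset.ne_of_mem_erase hfe)) x (by simp)
    have hynot : ∀ fe ∈ M.erase s(x, y), y ∉ fe := by
      intro fe hfe
      exact hM.2 _ he fe (Finset.mem_of_mem_erase hfe)
        (Ne.symm (Finset.ne_of_mem_erase hfe)) y (by simp)
    have hunot : ∀ fe ∈ M, u ∉ fe := fun fe hfe h => hu ⟨fe, hfe, h⟩
    have hwnot : ∀ fe ∈ M, w ∉ fe := fun fe hfe h => hw ⟨fe, hfe, h⟩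
    have huney : u ≠ y := fun h => hu ⟨s(x, y), he, by simp [h]⟩
    have hunex : u ≠ x := fun h => hu ⟨s(x, y), he, by simp [h]⟩
    have hwnex : w ≠ x := fun h => hw ⟨s(x, y), he, by simp [h]⟩
    have hd1 : ∀ fe ∈ M.erase s(x, y), ∀ v, v ∈ s(w, y) → v ∉ fe := by
      intro fe hfe v hv
      rw [Sym2.mem_iff] at hv
      rcases hv with rfl | rfl
      · exact hwnot _ (Finset.mem_of_mem_erase hfe)
      · exact hynot _ hfe
    obtain ⟨hM1, hc1⟩ := matching_insert G hM0 (G.mem_edgeSet.mpr hwy) hd1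
    have hd2 : ∀ fe ∈ insert s(w, y) (M.erase s(x, y)), ∀ v, v ∈ s(u, x) → v ∉ fe := by
      intro fe hfe v hv
      rw [Sym2.mem_iff] at hv
      rcases Finset.mem_insert.mp hfe with hfe | hfe
      · subst hfe
        rcases hv with rfl | rfl
        · simp only [Sym2.mem_iff]
          push_neg
          exact ⟨huw, huney⟩
        · simp only [Sym2.mem_iff]
          push_neg
          exact ⟨fun h => hwnex h.symm, fun h => hxne h⟩
      · rcases hv with rfl | rfl
        · exact hunot _ (Finset.mem_of_mem_erase hfe)
        · exact hxnot _ hfe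
    obtain ⟨hM2, hc2⟩ := matching_insert G hM1 (G.mem_edgeSet.mpr hux) hd2
    have hle := hmax _ hM2
    have h1 : 1 ≤ M.card := Finset.card_pos.mpr ⟨_, he⟩
    have := Finset.card_erase_of_mem he
    omega
  refine ⟨M.image part, ⟨?_, ?_, ?_⟩, ?_⟩
  · -- exact cover
    intro v
    by_cases hv : matched v
    · obtain ⟨e, he, hve⟩ := hv
      refine ⟨part e, ⟨Finset.mem_image_of_mem _ he, (hmem_part v e).mpr (Or.inl hve)⟩, ?_⟩
      rintro S ⟨hS, hvS⟩
      obtain ⟨e', he', rfl⟩ := Finset.mem_image.mp hS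
      rw [hbetween v e' e he' he hvS ((hmem_part v e).mpr (Or.inl hve))]
    · obtain ⟨hfvM, _⟩ := hfM v hv
      refine ⟨part (f v), ⟨Finset.mem_image_of_mem _ hfvM,
        (hmem_part v (f v)).mpr (Or.inr ⟨hv, rfl⟩)⟩, ?_⟩
      rintro S ⟨hS, hvS⟩
      obtain ⟨e', he', rfl⟩ := Finset.mem_image.mp hS
      rw [hbetween v e' (f v) he' hfvM hvS ((hmem_part v (f v)).mpr (Or.inr ⟨hv, rfl⟩))]
  · -- parts have size ≥ 2
    intro S hS
    obtain ⟨e, he, rfl⟩ := Finset.mem_image.mp hS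
    induction e using Sym2.ind with
    | _ x y =>
      have hxy : G.Adj x y := G.mem_edgeSet.mp (hM.1 _ he)
      have hsub : ({x, y} : Finset V) ⊆ part s(x, y) := by
        intro v hv
        rw [hmem_part]
        rcases Finset.mem_insert.mp hv with rfl | hv
        · exact Or.inl (by simp)
        · rw [Finset.mem_singleton] at hv
          exact Or.inl (by simp [hv])
      calc 2 = ({x, y} : Finset V).card := by rw [Finset.card_insert_of_notMem (by simp [hxy.ne]), Finset.card_singleton]
        _ ≤ _ := Finset.card_le_card hsub
  · -- star centers
    intro S hS
    obtain ⟨e, he, rfl⟩ := Finset.mem_image.mp hS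
    induction e using Sym2.ind with
    | _ x y =>
      have hxy : G.Adj x y := G.mem_edgeSet.mp (hM.1 _ he)
      have hxmem : x ∈ part s(x, y) := (hmem_part x _).mpr (Or.inl (by simp))
      have hymem : y ∈ part s(x, y) := (hmem_part y _).mpr (Or.inl (by simp))
      -- every extra vertex is unmatched and adjacent to x or y
      have hextra : ∀ u ∈ part s(x, y), u ≠ x → u ≠ y →
          ¬ matched u ∧ (G.Adj u x ∨ G.Adj u y) := by
        intro u hu hux huy
        rw [hmem_part] at hu
        rcases hu with hu | ⟨humatched, hfu⟩
        · rw [Sym2.mem_iff] at hu; tauto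
        · refine ⟨humatched, ?_⟩
          obtain ⟨_, c, hc, hadj⟩ := hfM u humatched
          rw [hfu, Sym2.mem_iff] at hc
          rcases hc with rfl | rfl
          · exact Or.inl hadj
          · exact Or.inr hadj
      by_cases hall : ∀ u ∈ part s(x, y), u ≠ x → G.Adj x u
      · exact ⟨x, hxmem, hall⟩
      · push_neg at hall
        obtain ⟨w, hwmem, hwnex, hwnadj⟩ := hall
        have hwney : w ≠ y := by rintro rfl; exact hwnadj hxy
        obtain ⟨hwum, hwadj⟩ := hextra w hwmem hwnex hwney
        have hwy : G.Adj w y := by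
          rcases hwadj with h | h
          · exact absurd h.symm hwnadj
          · exact h
        refine ⟨y, hymem, ?_⟩
        intro u humem huny
        by_cases hunx : u = x
        · subst hunx; exact hxy.symm
        by_cases huw : u = w
        · subst huw; exact hwy.symm
        obtain ⟨huum, huadj⟩ := hextra u humem hunx huny
        rcases huadj with h | h
        · exact absurd (hB x y u w he huum hwum huw h hwy) id
        · exact h.symm
  · -- cardinality
    rw [← hcard]
    apply Finset.card_image_of_injOn
    intro e1 h1 e2 h2 hpe
    induction e1 using Sym2.ind with
    | _ x y =>
      exact hbetween x _ _ h1 h2 ((hmem_part x _).mpr (Or.inl (by simp)))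
        (hpe ▸ (hmem_part x _).mpr (Or.inl (by simp)))
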